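/- A graph G = (V,E) admits a proper 3-coloring if and only if there exists a supported solution J of the source instance I_G w.r.t. the setting S (with Σ_st = {Col(x) → Col_t(x), E_s(x,y) → E_t(x,y), V(x) → ∃z HasC(x,z)} and Σ_t = ∅) such that the Boolean query Q = Q1 ∨ Q2 is false on J, where Q1 = ∃x,y (HasC(x,y) ∧ ¬Col_t(y)) and Q2 = ∃x,y,z (E_t(x,y) ∧ HasC(x,z) ∧ HasC(y,z)). -/
import Mathlib



namespace DE

abbrev Var := ℕ

inductive Term (C : Type) where
  | const : C → Term C
  | null : ℕ → Term C

structure Atom (R C : Type) where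
  rel : R
  args : List (Var ⊕ C)

structure Fact (R C : Type) where
  rel : R
  args : List (Term C)

abbrev Instance (R C : Type) := Set (Fact R C)

def termOf {C : Type} (h : Var → Term C) : Var ⊕ C → Term C
  | Sum.inl v => h v
  | Sum.inr c => Term.const c

def applyAtom {R C : Type} (h : Var → Term C) (a : Atom R C) : Fact R C :=
  ⟨a.rel, a.args.map (termOf h)⟩

/-- `h` maps every atom of `as` into the instance `I`. -/
def holdsBody {R C : Type} (I : Instance R C) (h : Var → Term C)
    (as : List (Atom R C)) : Prop :=
  ∀ a ∈ as, applyAtom h a ∈ I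

/-- A tuple-generating dependency. -/
structure TGD (R C : Type) where
  body : List (Atom R C)
  head : List (Atom R C)
  frontier : List Var
  exvars : List Var

def varsOf {R C : Type} (as : List (Atom R C)) : Set Var :=
  {v | ∃ a ∈ as, (Sum.inl v : Var ⊕ C) ∈ a.args}

/-- Well-formedness of a TGD: frontier variables occur in the body, existential
variables do not, and every head variable is a frontier or existential variable. -/
def TGD.wf {R C : Type} (ρ : TGD R C) : Prop :=
  (∀ v ∈ ρ.frontier, v ∈ varsOf ρ.body) ∧
  (∀ z ∈ ρ.exvars, z ∉ varsOf ρ.body) ∧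
  (∀ v ∈ varsOf ρ.head, v ∈ ρ.frontier ∨ v ∈ ρ.exvars)

/-- Satisfaction of a TGD by an instance. -/
def satTGD {R C : Type} (I : Instance R C) (ρ : TGD R C) : Prop :=
  ∀ h : Var → Term C, holdsBody I h ρ.body →
    ∃ h' : Var → Term C, (∀ v ∈ varsOf ρ.body, h' v = h v) ∧ holdsBody I h' ρ.head

/-- An equality-generating dependency. -/
structure EGD (R C : Type) where
  body : List (Atom R C)
  lhs : Var
  rhs : Var

def satEGD {R C : Type} (I : Instance R C) (η : EGD R C) : Prop :=
  ∀ h : Var → Term C, holdsBody I h η.body → h η.lhs = h η.rhs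

/-- An ex-choice: given a TGD and a tuple of constants for its frontier,
a constant for each existential variable. -/
abbrev ExChoice (R C : Type) := TGD R C → List C → Var → C

def constHom {C : Type} (h : Var → C) : Var → Term C := fun v => Term.const (h v)

/-- `I` satisfies all ground versions of the TGD `ρ` that are coherent with `γ`. -/
def satTGDcoh {R C : Type} (I : Instance R C) (γ : ExChoice R C) (ρ : TGD R C) : Prop :=
  ∀ h : Var → C, (∀ z ∈ ρ.exvars, h z = γ ρ (ρ.frontier.map h) z) →
    holdsBody I (constHom h) ρ.body → holdsBody I (constHom h) ρ.head

/-- A data exchange setting: source-to-target TGDs, target TGDs, target EGDs. -/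
structure Setting (R C : Type) where
  sigmaST : List (TGD R C)
  sigmaT : List (TGD R C)
  sigmaE : List (EGD R C)

def Setting.wf {R C : Type} (S : Setting R C) : Prop :=
  ∀ ρ ∈ S.sigmaST ++ S.sigmaT, ρ.wf

/-- Classical solution: `I ∪ J` satisfies `Σst` and `J` satisfies `Σt`. -/
def classicalSolution {R C : Type} (S : Setting R C) (I J : Instance R C) : Prop :=
  J.Finite ∧ (∀ ρ ∈ S.sigmaST, satTGD (I ∪ J) ρ) ∧
    (∀ ρ ∈ S.sigmaT, satTGD J ρ) ∧ (∀ η ∈ S.sigmaE, satEGD J η)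

def supportedWith {R C : Type} (S : Setting R C) (γ : ExChoice R C)
    (I J : Instance R C) : Prop :=
  (∀ ρ ∈ S.sigmaST, satTGDcoh (I ∪ J) γ ρ) ∧
    (∀ ρ ∈ S.sigmaT, satTGDcoh J γ ρ) ∧ (∀ η ∈ S.sigmaE, satEGD J η)

/-- Supported solution: for some ex-choice `γ`, `I ∪ J` satisfies `Σst^γ`,
`J` satisfies `Σt^γ`, and no proper subset of `J` does. -/
def supportedSolution {R C : Type} (S : Setting R C) (I J : Instance R C) : Prop :=
  J.Finite ∧ ∃ γ : ExChoice R C, supportedWith S γ I J ∧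
    ∀ J' : Instance R C, J' ⊂ J → ¬ supportedWith S γ I J'

/-- An instance without labeled nulls (a database). -/
def nullFree {R C : Type} (I : Instance R C) : Prop :=
  ∀ f ∈ I, ∀ t ∈ f.args, ∃ c : C, t = Term.const c

end DE

inductive GRel : Type
  | V | Es | Col | ColT | Et | HasC

namespace ThreeCol

def rho1 (C : Type) : DE.TGD GRel C :=
  ⟨[⟨GRel.Col, [Sum.inl 0]⟩], [⟨GRel.ColT, [Sum.inl 0]⟩], [0], []⟩

def rho2 (C : Type) : DE.TGD GRel C :=
  ⟨[⟨GRel.Es, [Sum.inl 0, Sum.inl 1]⟩], [⟨GRel.Et, [Sum.inl 0, Sum.inl 1]⟩], [0, 1], []⟩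

def rho3 (C : Type) : DE.TGD GRel C :=
  ⟨[⟨GRel.V, [Sum.inl 0]⟩], [⟨GRel.HasC, [Sum.inl 0, Sum.inl 1]⟩], [0], [1]⟩

def setting (C : Type) : DE.Setting GRel C := ⟨[rho1 C, rho2 C, rho3 C], [], []⟩

/-- The source instance `I_G` encoding the graph `(Vtx, E)` and the three colors. -/
def IG {Vtx C : Type} (E : Vtx → Vtx → Prop) (emb : Vtx → C) (r g b : C) :
    DE.Instance GRel C :=
  {f | (∃ v, f = ⟨GRel.V, [DE.Term.const (emb v)]⟩) ∨
       (∃ u v, E u v ∧ f = ⟨GRel.Es, [DE.Term.const (emb u), DE.Term.const (emb v)]⟩) ∨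
       f = ⟨GRel.Col, [DE.Term.const r]⟩ ∨
       f = ⟨GRel.Col, [DE.Term.const g]⟩ ∨
       f = ⟨GRel.Col, [DE.Term.const b]⟩}

/-- `Q1`: some node has a "color" that is not one of the copied colors. -/
def Q1 {C : Type} (J : DE.Instance GRel C) : Prop :=
  ∃ x y : DE.Term C, (⟨GRel.HasC, [x, y]⟩ : DE.Fact GRel C) ∈ J ∧
    (⟨GRel.ColT, [y]⟩ : DE.Fact GRel C) ∉ J

/-- `Q2`: the two endpoints of some edge share a color. -/
def Q2 {C : Type} (J : DE.Instance GRel C) : Prop :=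
  ∃ x y z : DE.Term C, (⟨GRel.Et, [x, y]⟩ : DE.Fact GRel C) ∈ J ∧
    (⟨GRel.HasC, [x, z]⟩ : DE.Fact GRel C) ∈ J ∧
    (⟨GRel.HasC, [y, z]⟩ : DE.Fact GRel C) ∈ J

/-- The target instance induced by a coloring `μ`. -/
def Jsol {Vtx C : Type} (E : Vtx → Vtx → Prop) (emb : Vtx → C) (r g b : C)
    (μ : Vtx → C) : DE.Instance GRel C :=
  {f | (∃ v, f = ⟨GRel.HasC, [DE.Term.const (emb v), DE.Term.const (μ v)]⟩) ∨
       (∃ u v, E u v ∧ f = ⟨GRel.Et, [DE.Term.const (emb u), DE.Term.const (emb v)]⟩) ∨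
       f = ⟨GRel.ColT, [DE.Term.const r]⟩ ∨
       f = ⟨GRel.ColT, [DE.Term.const g]⟩ ∨
       f = ⟨GRel.ColT, [DE.Term.const b]⟩}

end ThreeCol


section Aux
open DE ThreeCol

variable {Vtx C : Type}

open Classical in
noncomputable def gammaOf (emb : Vtx → C) (μ : Vtx → C) (d : C) : DE.ExChoice GRel C :=
  fun _ l _ => if h : ∃ v, l = [emb v] then μ h.choose else d

lemma gammaOf_spec (emb : Vtx → C) (hemb : Function.Injective emb) (μ : Vtx → C) (d : C)
    (ρ : DE.TGD GRel C) (v : Vtx) (z : DE.Var) :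
    gammaOf emb μ d ρ [emb v] z = μ v := by
  have h : ∃ u, ([emb v] : List C) = [emb u] := ⟨v, rfl⟩
  have key : ∀ hh : ∃ u, ([emb v] : List C) = [emb u], μ hh.choose = μ v := by
    intro hh
    have hs := hh.choose_spec
    injection hs with h1 h2
    exact (congrArg μ (hemb h1)).symm
  rw [gammaOf, dif_pos h]
  exact key _

end Aux


section Aux2
open DE ThreeCol

variable {Vtx C : Type} {E : Vtx → Vtx → Prop} {emb : Vtx → C} {r g b : C} {μ : Vtx → C}

lemma mem_IG_col {c : C} :
    (⟨GRel.Col, [DE.Term.const c]⟩ : DE.Fact GRel C) ∈ IG E emb r g b ↔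
      c = r ∨ c = g ∨ c = b := by
  simp [IG]

lemma mem_IG_es {x y : DE.Term C} :
    (⟨GRel.Es, [x, y]⟩ : DE.Fact GRel C) ∈ IG E emb r g b ↔
      ∃ u v, E u v ∧ x = DE.Term.const (emb u) ∧ y = DE.Term.const (emb v) := by
  simp [IG]

lemma mem_IG_v {x : DE.Term C} :
    (⟨GRel.V, [x]⟩ : DE.Fact GRel C) ∈ IG E emb r g b ↔ ∃ v, x = DE.Term.const (emb v) := by
  simp [IG]

lemma not_mem_IG_hasC {l : List (DE.Term C)} :
    (⟨GRel.HasC, l⟩ : DE.Fact GRel C) ∉ IG E emb r g b := by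
  simp [IG]

lemma not_mem_IG_et {l : List (DE.Term C)} :
    (⟨GRel.Et, l⟩ : DE.Fact GRel C) ∉ IG E emb r g b := by
  simp [IG]

lemma not_mem_IG_colT {l : List (DE.Term C)} :
    (⟨GRel.ColT, l⟩ : DE.Fact GRel C) ∉ IG E emb r g b := by
  simp [IG]

lemma mem_Jsol_hasC {x y : DE.Term C} :
    (⟨GRel.HasC, [x, y]⟩ : DE.Fact GRel C) ∈ Jsol E emb r g b μ ↔
      ∃ v, x = DE.Term.const (emb v) ∧ y = DE.Term.const (μ v) := by
  simp [Jsol]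

lemma mem_Jsol_et {x y : DE.Term C} :
    (⟨GRel.Et, [x, y]⟩ : DE.Fact GRel C) ∈ Jsol E emb r g b μ ↔
      ∃ u v, E u v ∧ x = DE.Term.const (emb u) ∧ y = DE.Term.const (emb v) := by
  simp [Jsol]

lemma mem_Jsol_colT {x : DE.Term C} :
    (⟨GRel.ColT, [x]⟩ : DE.Fact GRel C) ∈ Jsol E emb r g b μ ↔
      x = DE.Term.const r ∨ x = DE.Term.const g ∨ x = DE.Term.const b := by
  simp [Jsol]

lemma not_mem_Jsol_col {l : List (DE.Term C)} :
    (⟨GRel.Col, l⟩ : DE.Fact GRel C) ∉ Jsol E emb r g b μ := by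
  simp [Jsol]

lemma not_mem_Jsol_es {l : List (DE.Term C)} :
    (⟨GRel.Es, l⟩ : DE.Fact GRel C) ∉ Jsol E emb r g b μ := by
  simp [Jsol]

lemma not_mem_Jsol_v {l : List (DE.Term C)} :
    (⟨GRel.V, l⟩ : DE.Fact GRel C) ∉ Jsol E emb r g b μ := by
  simp [Jsol]

lemma rho1_mem : rho1 C ∈ (setting C).sigmaST := by simp [setting]
lemma rho2_mem : rho2 C ∈ (setting C).sigmaST := by simp [setting]
lemma rho3_mem : rho3 C ∈ (setting C).sigmaST := by simp [setting]

end Aux2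

open ThreeCol in
/-- `G` is 3-colorable iff some supported solution of `I_G`
falsifies the query `Q = Q1 ∨ Q2`. -/
theorem three_colorable_iff_supported_solution_falsifies {Vtx C : Type} [Fintype Vtx]
    (E : Vtx → Vtx → Prop) (emb : Vtx → C) (hemb : Function.Injective emb)
    (r g b : C) (hrg : r ≠ g) (hrb : r ≠ b) (hgb : g ≠ b)
    (hdisj : ∀ v, emb v ≠ r ∧ emb v ≠ g ∧ emb v ≠ b) :
    (∃ μ : Vtx → C, (∀ v, μ v = r ∨ μ v = g ∨ μ v = b) ∧
        ∀ u v, E u v → μ u ≠ μ v) ↔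
      ∃ J : DE.Instance GRel C,
        DE.supportedSolution (setting C) (IG E emb r g b) J ∧ ¬ Q1 J ∧ ¬ Q2 J := by
  constructor
  · rintro ⟨μ, hμcol, hμprop⟩
    have hJHasC : ∀ v : Vtx, (⟨GRel.HasC, [DE.Term.const (emb v), DE.Term.const (μ v)]⟩ :
        DE.Fact GRel C) ∈ Jsol E emb r g b μ := fun v => Or.inl ⟨v, rfl⟩
    have hJEt : ∀ u v : Vtx, E u v → (⟨GRel.Et, [DE.Term.const (emb u), DE.Term.const (emb v)]⟩ :
        DE.Fact GRel C) ∈ Jsol E emb r g b μ := fun u v h => Or.inr (Or.inl ⟨u, v, h, rfl⟩)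
    have hJColT : ∀ c : C, c = r ∨ c = g ∨ c = b → (⟨GRel.ColT, [DE.Term.const c]⟩ :
        DE.Fact GRel C) ∈ Jsol E emb r g b μ := by
      rintro c (rfl | rfl | rfl)
      · exact mem_Jsol_colT.mpr (Or.inl rfl)
      · exact mem_Jsol_colT.mpr (Or.inr (Or.inl rfl))
      · exact mem_Jsol_colT.mpr (Or.inr (Or.inr rfl))
    have hfin : (Jsol E emb r g b μ).Finite := by
      apply Set.Finite.subset (Set.Finite.union (Set.Finite.union
        (Set.finite_range (fun v : Vtx => (⟨GRel.HasC,
          [DE.Term.const (emb v), DE.Term.const (μ v)]⟩ : DE.Fact GRel C)))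
        (Set.finite_range (fun p : Vtx × Vtx => (⟨GRel.Et,
          [DE.Term.const (emb p.1), DE.Term.const (emb p.2)]⟩ : DE.Fact GRel C))))
        (((Set.finite_singleton (⟨GRel.ColT, [DE.Term.const b]⟩ : DE.Fact GRel C)).insert
          (⟨GRel.ColT, [DE.Term.const g]⟩ : DE.Fact GRel C)).insert
          (⟨GRel.ColT, [DE.Term.const r]⟩ : DE.Fact GRel C)))
      rintro f (⟨v, rfl⟩ | ⟨u, v, _, rfl⟩ | rfl | rfl | rfl)
      · exact Or.inl (Or.inl ⟨v, rfl⟩)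
      · exact Or.inl (Or.inr ⟨(u, v), rfl⟩)
      · exact Or.inr (Or.inl rfl)
      · exact Or.inr (Or.inr (Or.inl rfl))
      · exact Or.inr (Or.inr (Or.inr rfl))
    refine ⟨Jsol E emb r g b μ, ⟨hfin, gammaOf emb μ r, ⟨?_, ?_, ?_⟩, ?_⟩, ?_, ?_⟩
    · -- sigmaST coherent
      intro ρ hρ
      simp only [setting, List.mem_cons, List.not_mem_nil, or_false] at hρ
      rcases hρ with rfl | rfl | rfl
      · -- rho1
        intro h _ hbody
        have hb : (⟨GRel.Col, [DE.Term.const (h 0)]⟩ : DE.Fact GRel C) ∈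
            IG E emb r g b ∪ Jsol E emb r g b μ :=
          hbody ⟨GRel.Col, [Sum.inl 0]⟩ (List.mem_singleton.mpr rfl)
        have hc : h 0 = r ∨ h 0 = g ∨ h 0 = b := by
          rcases hb with hb | hb
          · exact mem_IG_col.mp hb
          · exact absurd hb not_mem_Jsol_col
        intro a ha
        rw [show (rho1 C).head = [⟨GRel.ColT, [Sum.inl 0]⟩] from rfl,
          List.mem_singleton] at ha
        subst ha
        exact Or.inr (hJColT _ hc)
      · -- rho2
        intro h _ hbody
        have hb : (⟨GRel.Es, [DE.Term.const (h 0), DE.Term.const (h 1)]⟩ : DE.Fact GRel C) ∈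
            IG E emb r g b ∪ Jsol E emb r g b μ :=
          hbody ⟨GRel.Es, [Sum.inl 0, Sum.inl 1]⟩ (List.mem_singleton.mpr rfl)
        have hc : ∃ u v, E u v ∧ DE.Term.const (h 0) = DE.Term.const (emb u) ∧
            DE.Term.const (h 1) = DE.Term.const (emb v) := by
          rcases hb with hb | hb
          · exact mem_IG_es.mp hb
          · exact absurd hb not_mem_Jsol_es
        obtain ⟨u, v, huv, hu, hv⟩ := hc
        intro a ha
        rw [show (rho2 C).head = [⟨GRel.Et, [Sum.inl 0, Sum.inl 1]⟩] from rfl,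
          List.mem_singleton] at ha
        subst ha
        show (⟨GRel.Et, [DE.Term.const (h 0), DE.Term.const (h 1)]⟩ : DE.Fact GRel C) ∈ _
        rw [hu, hv]
        exact Or.inr (hJEt u v huv)
      · -- rho3
        intro h hcoh hbody
        have hb : (⟨GRel.V, [DE.Term.const (h 0)]⟩ : DE.Fact GRel C) ∈
            IG E emb r g b ∪ Jsol E emb r g b μ :=
          hbody ⟨GRel.V, [Sum.inl 0]⟩ (List.mem_singleton.mpr rfl)
        have hc : ∃ v, DE.Term.const (h 0) = DE.Term.const (emb v) := by
          rcases hb with hb | hb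
          · exact mem_IG_v.mp hb
          · exact absurd hb not_mem_Jsol_v
        obtain ⟨v, hv⟩ := hc
        have hv' : h 0 = emb v := by injection hv
        have h1 : h 1 = μ v := by
          have := hcoh 1 (List.mem_singleton.mpr rfl)
          rw [show (rho3 C).frontier.map h = [h 0] from rfl, hv'] at this
          rw [this]
          exact gammaOf_spec emb hemb μ r _ v 1
        intro a ha
        rw [show (rho3 C).head = [⟨GRel.HasC, [Sum.inl 0, Sum.inl 1]⟩] from rfl,
          List.mem_singleton] at ha
        subst ha
        show (⟨GRel.HasC, [DE.Term.const (h 0), DE.Term.const (h 1)]⟩ : DE.Fact GRel C) ∈ _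
        rw [hv', h1]
        exact Or.inr (hJHasC v)
    · intro ρ hρ; simp [setting] at hρ
    · intro η hη; simp [setting] at hη
    · -- minimality
      intro J' hJ' hsup'
      have colt_case : ∀ c : C, c = r ∨ c = g ∨ c = b →
          (⟨GRel.ColT, [DE.Term.const c]⟩ : DE.Fact GRel C) ∈ J' := by
        intro c hcrgb
        have := hsup'.1 (rho1 C) rho1_mem (fun _ => c)
          (by intro z hz; simp [rho1] at hz)
          (by
            intro a ha
            rw [show (rho1 C).body = [⟨GRel.Col, [Sum.inl 0]⟩] from rfl,
              List.mem_singleton] at ha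
            subst ha
            exact Or.inl (mem_IG_col.mpr hcrgb))
        have hh := this ⟨GRel.ColT, [Sum.inl 0]⟩ (List.mem_singleton.mpr rfl)
        have hh' : (⟨GRel.ColT, [DE.Term.const c]⟩ : DE.Fact GRel C) ∈
            IG E emb r g b ∪ J' := hh
        rcases hh' with hh' | hh'
        · exact absurd hh' not_mem_IG_colT
        · exact hh'
      apply hJ'.2
      intro f hf
      rcases hf with ⟨v, rfl⟩ | ⟨u, v, he, rfl⟩ | rfl | rfl | rfl
      · -- HasC fact
        have := hsup'.1 (rho3 C) rho3_mem (fun n => if n = 0 then emb v else μ v)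
          (by
            intro z hz
            rw [show (rho3 C).exvars = [1] from rfl, List.mem_singleton] at hz
            subst hz
            exact (gammaOf_spec emb hemb μ r _ v 1).symm)
          (by
            intro a ha
            rw [show (rho3 C).body = [⟨GRel.V, [Sum.inl 0]⟩] from rfl,
              List.mem_singleton] at ha
            subst ha
            exact Or.inl (Or.inl ⟨v, rfl⟩))
        have hh := this ⟨GRel.HasC, [Sum.inl 0, Sum.inl 1]⟩ (List.mem_singleton.mpr rfl)
        have hh' : (⟨GRel.HasC, [DE.Term.const (emb v), DE.Term.const (μ v)]⟩ :
            DE.Fact GRel C) ∈ IG E emb r g b ∪ J' := hh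
        rcases hh' with hh' | hh'
        · exact absurd hh' not_mem_IG_hasC
        · exact hh'
      · -- Et fact
        have := hsup'.1 (rho2 C) rho2_mem (fun n => if n = 0 then emb u else emb v)
          (by intro z hz; simp [rho2] at hz)
          (by
            intro a ha
            rw [show (rho2 C).body = [⟨GRel.Es, [Sum.inl 0, Sum.inl 1]⟩] from rfl,
              List.mem_singleton] at ha
            subst ha
            exact Or.inl (Or.inr (Or.inl ⟨u, v, he, rfl⟩)))
        have hh := this ⟨GRel.Et, [Sum.inl 0, Sum.inl 1]⟩ (List.mem_singleton.mpr rfl)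
        have hh' : (⟨GRel.Et, [DE.Term.const (emb u), DE.Term.const (emb v)]⟩ :
            DE.Fact GRel C) ∈ IG E emb r g b ∪ J' := hh
        rcases hh' with hh' | hh'
        · exact absurd hh' not_mem_IG_et
        · exact hh'
      · exact colt_case r (Or.inl rfl)
      · exact colt_case g (Or.inr (Or.inl rfl))
      · exact colt_case b (Or.inr (Or.inr rfl))
    · -- ¬ Q1
      rintro ⟨x, y, hxy, hy⟩
      obtain ⟨v, rfl, rfl⟩ := mem_Jsol_hasC.mp hxy
      exact hy (hJColT _ (hμcol v))
    · -- ¬ Q2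
      rintro ⟨x, y, z, het, h1, h2⟩
      obtain ⟨u, v, huv, rfl, rfl⟩ := mem_Jsol_et.mp het
      obtain ⟨u', hu1, hu2⟩ := mem_Jsol_hasC.mp h1
      obtain ⟨v', hv1, hv2⟩ := mem_Jsol_hasC.mp h2
      obtain rfl : u' = u := (hemb (by injection hu1)).symm
      obtain rfl : v' = v := (hemb (by injection hv1)).symm
      exact hμprop _ _ huv (DE.Term.const.inj (hu2.symm.trans hv2))
  · rintro ⟨J, ⟨hfin, γ, hsup, hmin⟩, hq1, hq2⟩
    set μ : Vtx → C := fun v => γ (rho3 C) [emb v] 1 with hμdef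
    have hHasC : ∀ v : Vtx, (⟨GRel.HasC, [DE.Term.const (emb v), DE.Term.const (μ v)]⟩ :
        DE.Fact GRel C) ∈ J := by
      intro v
      have := hsup.1 (rho3 C) rho3_mem (fun n => if n = 0 then emb v else μ v)
        (by
          intro z hz
          rw [show (rho3 C).exvars = [1] from rfl, List.mem_singleton] at hz
          subst hz
          rfl)
        (by
          intro a ha
          rw [show (rho3 C).body = [⟨GRel.V, [Sum.inl 0]⟩] from rfl,
            List.mem_singleton] at ha
          subst ha
          exact Or.inl (mem_IG_v.mpr ⟨v, rfl⟩))
      have hh := this ⟨GRel.HasC, [Sum.inl 0, Sum.inl 1]⟩ (List.mem_singleton.mpr rfl)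
      have hh' : (⟨GRel.HasC, [DE.Term.const (emb v), DE.Term.const (μ v)]⟩ :
          DE.Fact GRel C) ∈ IG E emb r g b ∪ J := hh
      rcases hh' with hh' | hh'
      · exact absurd hh' not_mem_IG_hasC
      · exact hh'
    have hColT : ∀ c : C, c = r ∨ c = g ∨ c = b →
        (⟨GRel.ColT, [DE.Term.const c]⟩ : DE.Fact GRel C) ∈ J := by
      intro c hcrgb
      have := hsup.1 (rho1 C) rho1_mem (fun _ => c)
        (by intro z hz; simp [rho1] at hz)
        (by
          intro a ha
          rw [show (rho1 C).body = [⟨GRel.Col, [Sum.inl 0]⟩] from rfl,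
            List.mem_singleton] at ha
          subst ha
          exact Or.inl (mem_IG_col.mpr hcrgb))
      have hh := this ⟨GRel.ColT, [Sum.inl 0]⟩ (List.mem_singleton.mpr rfl)
      have hh' : (⟨GRel.ColT, [DE.Term.const c]⟩ : DE.Fact GRel C) ∈
          IG E emb r g b ∪ J := hh
      rcases hh' with hh' | hh'
      · exact absurd hh' not_mem_IG_colT
      · exact hh'
    have hEt : ∀ u v : Vtx, E u v →
        (⟨GRel.Et, [DE.Term.const (emb u), DE.Term.const (emb v)]⟩ : DE.Fact GRel C) ∈ J := by
      intro u v huv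
      have := hsup.1 (rho2 C) rho2_mem (fun n => if n = 0 then emb u else emb v)
        (by intro z hz; simp [rho2] at hz)
        (by
          intro a ha
          rw [show (rho2 C).body = [⟨GRel.Es, [Sum.inl 0, Sum.inl 1]⟩] from rfl,
            List.mem_singleton] at ha
          subst ha
          exact Or.inl (mem_IG_es.mpr ⟨u, v, huv, rfl, rfl⟩))
      have hh := this ⟨GRel.Et, [Sum.inl 0, Sum.inl 1]⟩ (List.mem_singleton.mpr rfl)
      have hh' : (⟨GRel.Et, [DE.Term.const (emb u), DE.Term.const (emb v)]⟩ :
          DE.Fact GRel C) ∈ IG E emb r g b ∪ J := hh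
      rcases hh' with hh' | hh'
      · exact absurd hh' not_mem_IG_et
      · exact hh'
    -- J is contained in the canonical solution
    have hsup' : DE.supportedWith (setting C) γ (IG E emb r g b)
        (J ∩ Jsol E emb r g b μ) := by
      refine ⟨?_, ?_, ?_⟩
      · intro ρ hρ
        simp only [setting, List.mem_cons, List.not_mem_nil, or_false] at hρ
        rcases hρ with rfl | rfl | rfl
        · intro h _ hbody
          have hb : (⟨GRel.Col, [DE.Term.const (h 0)]⟩ : DE.Fact GRel C) ∈
              IG E emb r g b ∪ (J ∩ Jsol E emb r g b μ) :=
            hbody ⟨GRel.Col, [Sum.inl 0]⟩ (List.mem_singleton.mpr rfl)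
          have hc : h 0 = r ∨ h 0 = g ∨ h 0 = b := by
            rcases hb with hb | hb
            · exact mem_IG_col.mp hb
            · exact absurd hb.2 not_mem_Jsol_col
          intro a ha
          rw [show (rho1 C).head = [⟨GRel.ColT, [Sum.inl 0]⟩] from rfl,
            List.mem_singleton] at ha
          subst ha
          refine Or.inr ⟨hColT _ hc, mem_Jsol_colT.mpr ?_⟩
          rcases hc with hc | hc | hc
          · exact Or.inl (congrArg DE.Term.const hc)
          · exact Or.inr (Or.inl (congrArg DE.Term.const hc))
          · exact Or.inr (Or.inr (congrArg DE.Term.const hc))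
        · intro h _ hbody
          have hb : (⟨GRel.Es, [DE.Term.const (h 0), DE.Term.const (h 1)]⟩ : DE.Fact GRel C) ∈
              IG E emb r g b ∪ (J ∩ Jsol E emb r g b μ) :=
            hbody ⟨GRel.Es, [Sum.inl 0, Sum.inl 1]⟩ (List.mem_singleton.mpr rfl)
          have hc : ∃ u v, E u v ∧ DE.Term.const (h 0) = DE.Term.const (emb u) ∧
              DE.Term.const (h 1) = DE.Term.const (emb v) := by
            rcases hb with hb | hb
            · exact mem_IG_es.mp hb
            · exact absurd hb.2 not_mem_Jsol_es
          obtain ⟨u, v, huv, hu, hv⟩ := hc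
          intro a ha
          rw [show (rho2 C).head = [⟨GRel.Et, [Sum.inl 0, Sum.inl 1]⟩] from rfl,
            List.mem_singleton] at ha
          subst ha
          show (⟨GRel.Et, [DE.Term.const (h 0), DE.Term.const (h 1)]⟩ : DE.Fact GRel C) ∈ _
          rw [hu, hv]
          exact Or.inr ⟨hEt u v huv, mem_Jsol_et.mpr ⟨u, v, huv, rfl, rfl⟩⟩
        · intro h hcoh hbody
          have hb : (⟨GRel.V, [DE.Term.const (h 0)]⟩ : DE.Fact GRel C) ∈
              IG E emb r g b ∪ (J ∩ Jsol E emb r g b μ) :=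
            hbody ⟨GRel.V, [Sum.inl 0]⟩ (List.mem_singleton.mpr rfl)
          have hc : ∃ v, DE.Term.const (h 0) = DE.Term.const (emb v) := by
            rcases hb with hb | hb
            · exact mem_IG_v.mp hb
            · exact absurd hb.2 not_mem_Jsol_v
          obtain ⟨v, hv⟩ := hc
          have hv' : h 0 = emb v := by injection hv
          have h1 : h 1 = μ v := by
            have := hcoh 1 (List.mem_singleton.mpr rfl)
            rw [show (rho3 C).frontier.map h = [h 0] from rfl, hv'] at this
            exact this
          intro a ha
          rw [show (rho3 C).head = [⟨GRel.HasC, [Sum.inl 0, Sum.inl 1]⟩] from rfl,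
            List.mem_singleton] at ha
          subst ha
          show (⟨GRel.HasC, [DE.Term.const (h 0), DE.Term.const (h 1)]⟩ :
            DE.Fact GRel C) ∈ _
          rw [hv', h1]
          exact Or.inr ⟨hHasC v, mem_Jsol_hasC.mpr ⟨v, rfl, rfl⟩⟩
      · intro ρ hρ; simp [setting] at hρ
      · intro η hη; simp [setting] at hη
    have hJeq : J ∩ Jsol E emb r g b μ = J := by
      by_contra hne
      exact hmin _ (lt_of_le_of_ne Set.inter_subset_left hne) hsup'
    have hJsub : J ⊆ Jsol E emb r g b μ := by
      rw [← hJeq]; exact Set.inter_subset_right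
    refine ⟨μ, ?_, ?_⟩
    · intro v
      have hmemT : (⟨GRel.ColT, [DE.Term.const (μ v)]⟩ : DE.Fact GRel C) ∈ J := by
        by_contra hn
        exact hq1 ⟨_, _, hHasC v, hn⟩
      have := mem_Jsol_colT.mp (hJsub hmemT)
      rcases this with h | h | h
      · exact Or.inl (by injection h)
      · exact Or.inr (Or.inl (by injection h))
      · exact Or.inr (Or.inr (by injection h))
    · intro u v huv heq
      exact hq2 ⟨DE.Term.const (emb u), DE.Term.const (emb v), DE.Term.const (μ u),
        hEt u v huv, hHasC u, by rw [heq]; exact hHasC v⟩
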